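/- (Lemma 2) Let (a_m) be a finite sequence of points in [0, 1/2] and A, B ≥ 0 such that #{m : a_m ≤ x} ≤ A + Bx for every 0 ≤ x ≤ 1/2. Then for any H > 0, Σ_m min{H, a_m^{−1}} ≤ AH + B(1 + |log H|). -/

import Mathlib

open scoped Classical
open Filter Asymptotics MeasureTheory

noncomputable section

lemma aux_int_sq {c : ℝ} (hc : 0 < c) (hcb : c ≤ 1/2) :
    IntegrableOn (fun x : ℝ => (x^2)⁻¹) (Set.Ioc c (1/2)) := by
  rw [← intervalIntegrable_iff_integrableOn_Ioc_of_le hcb]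
  have h0 : (0:ℝ) ∉ Set.uIcc c (1/2) := by
    rw [Set.uIcc_of_le hcb]; intro h; exact absurd h.1 (not_le.mpr hc)
  have := intervalIntegral.intervalIntegrable_zpow (a := c) (b := 1/2)
    (μ := volume) (n := -2) (Or.inr h0)
  convert this using 1
  ext x; simp [zpow_neg]

lemma aux_int_sq_val {c : ℝ} (hc : 0 < c) (hcb : c ≤ 1/2) :
    ∫ x in Set.Ioc c (1/2), (x^2)⁻¹ = c⁻¹ - 2 := by
  rw [← intervalIntegral.integral_of_le hcb]
  have h0 : (0:ℝ) ∉ Set.uIcc c (1/2) := by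
    rw [Set.uIcc_of_le hcb]; intro h; exact absurd h.1 (not_le.mpr hc)
  have h := integral_zpow (a := c) (b := 1/2) (n := -2) (Or.inr ⟨by norm_num, h0⟩)
  have h2 : ∫ x in c..(1/2:ℝ), (x^2)⁻¹ = ∫ x in c..(1/2:ℝ), x ^ (-2:ℤ) := by
    apply intervalIntegral.integral_congr
    intro x hx
    simp [zpow_neg]
  rw [h2, h]
  norm_num
  ring

lemma aux_int_inv {c : ℝ} (hc : 0 < c) (hcb : c ≤ 1/2) :
    IntegrableOn (fun x : ℝ => x⁻¹) (Set.Ioc c (1/2)) := by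
  rw [← intervalIntegrable_iff_integrableOn_Ioc_of_le hcb]
  apply intervalIntegral.intervalIntegrable_inv
  · intro x hx
    rw [Set.uIcc_of_le hcb] at hx
    exact ne_of_gt (lt_of_lt_of_le hc hx.1)
  · exact continuousOn_id

/-- **Lemma 2.** -/
theorem lemma_two
    (N : ℕ) (a : Fin N → ℝ) (A B : ℝ) (hA : 0 ≤ A) (hB : 0 ≤ B)
    (ha : ∀ m, a m ∈ Set.Icc (0:ℝ) (1/2))
    (hcount : ∀ x : ℝ, 0 ≤ x → x ≤ 1/2 →
      ((Finset.univ.filter fun m => a m ≤ x).card : ℝ) ≤ A + B * x)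
    (H : ℝ) (hH : 0 < H) :
    ∑ m, (if a m = 0 then H else min H (a m)⁻¹) ≤ A * H + B * (1 + |Real.log H|) := by
  classical
  have habs : Real.log H ≤ |Real.log H| := le_abs_self _
  have habs0 : 0 ≤ |Real.log H| := abs_nonneg _
  -- count at 1/2
  have hfil : (Finset.univ.filter fun m => a m ≤ (1/2:ℝ)) = Finset.univ := by
    apply Finset.filter_true_of_mem; intro m _; exact (ha m).2
  have hcN : (N:ℝ) ≤ A + B * (1/2) := by
    have hc := hcount (1/2) (by norm_num) le_rfl
    rwa [hfil, Finset.card_univ, Fintype.card_fin] at hc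
  by_cases hH2 : H ≤ 2
  · -- easy case: every term equals H
    have hsum : ∀ m : Fin N, (if a m = 0 then H else min H (a m)⁻¹) = H := by
      intro m
      rcases eq_or_lt_of_le (ha m).1 with h0 | h0
      · simp [← h0]
      · have h2 : (2:ℝ) ≤ (a m)⁻¹ := by
          have := inv_anti₀ h0 (ha m).2
          norm_num at this
          exact this
        rw [if_neg h0.ne', min_eq_left (hH2.trans h2)]
    rw [Finset.sum_congr rfl (fun m _ => hsum m), Finset.sum_const,
      Finset.card_univ, Fintype.card_fin, nsmul_eq_mul]
    nlinarith [hH.le]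
  · push_neg at hH2
    set t : ℝ := H⁻¹ with ht
    have ht0 : 0 < t := inv_pos.mpr hH
    have ht2 : t < 1/2 := by
      rw [ht, show (1/2:ℝ) = 2⁻¹ by norm_num]
      exact inv_strictAnti₀ (by norm_num) hH2
    have htinv : t⁻¹ = H := inv_inv H
    set s : Set ℝ := Set.Ioc t (1/2) with hs
    set g : Fin N → ℝ → ℝ := fun m => (Set.Ici (a m)).indicator (fun x => (x^2)⁻¹) with hg
    have hgint : ∀ m : Fin N, IntegrableOn (g m) s := fun m =>
      (aux_int_sq ht0 ht2.le).indicator measurableSet_Ici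
    have key : ∀ m : Fin N,
        (if a m = 0 then H else min H (a m)⁻¹) = 2 + ∫ x in s, g m x := by
      intro m
      rw [hg]
      rw [MeasureTheory.setIntegral_indicator measurableSet_Ici]
      by_cases hm : a m ≤ t
      · have hss : s ∩ Set.Ici (a m) = s := by
          apply Set.inter_eq_left.mpr
          intro x hx
          exact le_trans hm (le_of_lt hx.1)
        rw [hss, hs, aux_int_sq_val ht0 ht2.le, htinv]
        rcases eq_or_lt_of_le (ha m).1 with h0 | h0
        · rw [if_pos h0.symm]; ring
        · have hle : H ≤ (a m)⁻¹ := by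
            rw [← htinv]
            exact inv_anti₀ h0 hm
          rw [if_neg h0.ne', min_eq_left hle]; ring
      · push_neg at hm
        have h0 : 0 < a m := lt_trans ht0 hm
        have hss : s ∩ Set.Ici (a m) = Set.Icc (a m) (1/2) := by
          ext x
          simp only [hs, Set.mem_inter_iff, Set.mem_Ioc, Set.mem_Ici, Set.mem_Icc]
          constructor
          · rintro ⟨⟨_, h2⟩, h3⟩; exact ⟨h3, h2⟩
          · rintro ⟨h1, h2⟩; exact ⟨⟨lt_of_lt_of_le hm h1, h2⟩, h1⟩
        rw [hss, MeasureTheory.integral_Icc_eq_integral_Ioc,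
          aux_int_sq_val h0 (ha m).2]
        have hle : (a m)⁻¹ ≤ H := by
          rw [← htinv]
          exact inv_anti₀ ht0 hm.le
        rw [if_neg h0.ne', min_eq_right hle]; ring
    rw [Finset.sum_congr rfl (fun m _ => key m), Finset.sum_add_distrib,
      Finset.sum_const, Finset.card_univ, Fintype.card_fin, nsmul_eq_mul,
      ← MeasureTheory.integral_finset_sum Finset.univ (fun m _ => hgint m)]
    -- bound the integral
    have hintbound : (∫ x in s, ∑ m, g m x) ≤ ∫ x in s, (A * (x^2)⁻¹ + B * x⁻¹) := by
      apply MeasureTheory.setIntegral_mono_on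
      · exact MeasureTheory.integrable_finset_sum _ (fun m _ => hgint m)
      · exact ((aux_int_sq ht0 ht2.le).const_mul A).add ((aux_int_inv ht0 ht2.le).const_mul B)
      · exact measurableSet_Ioc
      · intro x hx
        have hx0 : 0 < x := lt_trans ht0 hx.1
        have hsum : ∑ m, g m x = ((Finset.univ.filter fun m => a m ≤ x).card : ℝ) * (x^2)⁻¹ := by
          rw [hg]
          simp only [Set.indicator_apply, Set.mem_Ici]
          rw [← Finset.sum_filter, Finset.sum_const, nsmul_eq_mul]
        rw [hsum]
        have hbd := hcount x hx0.le hx.2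
        have := mul_le_mul_of_nonneg_right hbd (by positivity : (0:ℝ) ≤ (x^2)⁻¹)
        calc ((Finset.univ.filter fun m => a m ≤ x).card : ℝ) * (x^2)⁻¹
            ≤ (A + B * x) * (x^2)⁻¹ := this
          _ = A * (x^2)⁻¹ + B * x⁻¹ := by field_simp
    have hintval : (∫ x in s, (A * (x^2)⁻¹ + B * x⁻¹))
        = A * (H - 2) + B * (Real.log H - Real.log 2) := by
      rw [MeasureTheory.integral_add ((aux_int_sq ht0 ht2.le).const_mul A)
        ((aux_int_inv ht0 ht2.le).const_mul B),
        MeasureTheory.integral_const_mul, MeasureTheory.integral_const_mul,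
        aux_int_sq_val ht0 ht2.le, htinv]
      have hinv : (∫ x in s, x⁻¹) = Real.log H - Real.log 2 := by
        rw [hs, ← intervalIntegral.integral_of_le ht2.le,
          integral_inv_of_pos ht0 (by norm_num)]
        rw [ht]
        rw [show (1/2:ℝ) / H⁻¹ = H / 2 by field_simp]
        exact Real.log_div hH.ne' (by norm_num)
      rw [hinv]
    rw [hintval] at hintbound
    have hlog2 : (0:ℝ) ≤ Real.log 2 := Real.log_nonneg (by norm_num)
    have h1 : B * Real.log H ≤ B * |Real.log H| := mul_le_mul_of_nonneg_left habs hB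
    have h2 : 0 ≤ B * Real.log 2 := mul_nonneg hB hlog2
    linarith
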